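/- Integer Tverberg theorem: let d ≥ 1 and r ≥ 1, and let P ⊆ ℤ^d be a finite set with |P| ≥ (r−1)·d·2^d + 1. Then P can be partitioned into r pairwise disjoint subsets P₁, …, P_r such that the intersection ⋂_{i=1}^r conv(P_i) contains a point of ℤ^d. -/

import Mathlib

open Finset

/-- coordinatewise cast of an integer vector to a real vector -/
private def ctR {d : ℕ} (w : Fin d → ℤ) : Fin d → ℝ := fun j => (w j : ℝ)

/-- integer dot product -/
private def idot {d : ℕ} (a p : Fin d → ℤ) : ℤ := ∑ i, a i * p i

private lemma f_repr {d : ℕ} (f : (Fin d → ℝ) →L[ℝ] ℝ) (x : Fin d → ℝ) :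
    f x = ∑ i, x i * f (Pi.single i 1) := by
  have hx : x = ∑ i, x i • (Pi.single i 1 : Fin d → ℝ) := by
    funext j
    simp [Finset.sum_apply, Pi.single_apply, mul_ite]
  conv_lhs => rw [hx]
  rw [map_sum]
  exact Finset.sum_congr rfl fun i _ => by rw [map_smul, smul_eq_mul]

private lemma sep {d : ℕ} (S : Finset (Fin d → ℤ)) (z : Fin d → ℤ)
    (hz : ctR z ∉ convexHull ℝ (↑(S.image ctR) : Set (Fin d → ℝ))) :
    ∃ a : Fin d → ℤ, ∀ p ∈ S, idot a p < idot a z := by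
  classical
  rcases S.eq_empty_or_nonempty with rfl | hS
  · exact ⟨0, by simp⟩
  have hfin : (↑(S.image ctR) : Set (Fin d → ℝ)).Finite := (S.image ctR).finite_toSet
  have hcl : IsClosed (convexHull ℝ (↑(S.image ctR) : Set (Fin d → ℝ))) :=
    (hfin.isCompact_convexHull ℝ).isClosed
  obtain ⟨f, u, hfu, hu⟩ :=
    geometric_hahn_banach_closed_point (convex_convexHull ℝ _) hcl hz
  set v : Fin d → ℝ := fun i => f (Pi.single i 1) with hv
  have hf : ∀ x : Fin d → ℝ, f x = ∑ i, x i * v i := fun x => f_repr f x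
  have hfp : ∀ p ∈ S, f (ctR p) < u := by
    intro p hp
    exact hfu _ (subset_convexHull ℝ _ (by
      simp only [Finset.coe_image, Set.mem_image]
      exact ⟨p, by simpa using hp, rfl⟩))
  set δ : ℝ := f (ctR z) - u with hδ
  have hδpos : 0 < δ := by simp only [hδ]; linarith
  set M : ℝ := ∑ p ∈ S, ∑ i, |(z i : ℝ) - (p i : ℝ)| with hMdef
  have hM0 : 0 ≤ M := Finset.sum_nonneg fun p _ => Finset.sum_nonneg fun i _ => abs_nonneg _
  have hMp : ∀ p ∈ S, ∑ i, |(z i : ℝ) - (p i : ℝ)| ≤ M := by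
    intro p hp
    exact Finset.single_le_sum (f := fun p => ∑ i, |(z i : ℝ) - (p i : ℝ)|)
      (fun q _ => Finset.sum_nonneg fun i _ => abs_nonneg _) hp
  obtain ⟨K, hK⟩ := exists_nat_gt (M / δ)
  have hKδ : M < K * δ := (div_lt_iff₀ hδpos).mp hK
  refine ⟨fun i => round ((K:ℝ) * v i), ?_⟩
  intro p hp
  set a : Fin d → ℤ := fun i => round ((K:ℝ) * v i) with ha
  have habs : ∀ i, |(a i : ℝ) - (K:ℝ) * v i| ≤ 1/2 := by
    intro i
    simpa [ha, abs_sub_comm] using abs_sub_round ((K:ℝ) * v i)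
  set w : Fin d → ℝ := fun i => (z i : ℝ) - (p i : ℝ) with hw
  have expand : ∑ i, (a i : ℝ) * w i
      = (∑ i, ((a i : ℝ) - (K:ℝ) * v i) * w i) + (K:ℝ) * ∑ i, v i * w i := by
    rw [Finset.mul_sum, ← Finset.sum_add_distrib]
    exact Finset.sum_congr rfl fun i _ => by ring
  have hvw : ∑ i, v i * w i = f (ctR z) - f (ctR p) := by
    rw [hf (ctR z), hf (ctR p), ← Finset.sum_sub_distrib]
    exact Finset.sum_congr rfl fun i _ => by simp [hw, ctR]; ring
  have herr : -(M/2) ≤ ∑ i, ((a i : ℝ) - (K:ℝ) * v i) * w i := by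
    have h1 : |∑ i, ((a i : ℝ) - (K:ℝ) * v i) * w i| ≤ ∑ i, |((a i : ℝ) - (K:ℝ) * v i) * w i| :=
      Finset.abs_sum_le_sum_abs _ _
    have h2 : ∑ i, |((a i : ℝ) - (K:ℝ) * v i) * w i| ≤ ∑ i, (1/2) * |w i| := by
      refine Finset.sum_le_sum fun i _ => ?_
      rw [abs_mul]
      exact mul_le_mul_of_nonneg_right (habs i) (abs_nonneg _)
    have h3 : ∑ i, (1/2 : ℝ) * |w i| ≤ M/2 := by
      rw [← Finset.mul_sum]
      have := hMp p hp
      linarith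
    have := neg_abs_le (∑ i, ((a i : ℝ) - (K:ℝ) * v i) * w i)
    linarith
  have hmain : (0:ℝ) < ∑ i, (a i : ℝ) * w i := by
    have h4 : δ ≤ f (ctR z) - f (ctR p) := by
      have := hfp p hp
      simp only [hδ]; linarith
    have h5 : (K:ℝ) * δ ≤ (K:ℝ) * (f (ctR z) - f (ctR p)) :=
      mul_le_mul_of_nonneg_left h4 (by positivity)
    rw [expand, hvw]
    linarith
  have hcast : ((idot a z - idot a p : ℤ) : ℝ) = ∑ i, (a i : ℝ) * w i := by
    push_cast [idot, hw, ← Finset.sum_sub_distrib]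
    exact Finset.sum_congr rfl fun i _ => by ring
  have : (0:ℤ) < idot a z - idot a p := by
    have : (0:ℝ) < ((idot a z - idot a p : ℤ) : ℝ) := by rw [hcast]; exact hmain
    exact_mod_cast this
  omega


private lemma bellScarf {d : ℕ} (C : Finset ((Fin d → ℤ) × ℤ))
    (h : ∀ s ⊆ C, s.card ≤ 2^d → ∃ z : Fin d → ℤ, ∀ c ∈ s, idot c.1 z ≤ c.2) :
    ∃ z : Fin d → ℤ, ∀ c ∈ C, idot c.1 z ≤ c.2 := by
  classical
  by_contra hC
  set 𝔉 := C.powerset.filter (fun s => ¬ ∃ z, ∀ c ∈ s, idot c.1 z ≤ c.2) with h𝔉def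
  have h𝔉 : C ∈ 𝔉 := by
    simp only [h𝔉def, mem_filter, mem_powerset]
    exact ⟨Finset.Subset.refl C, hC⟩
  obtain ⟨s, hs𝔉, hsmin⟩ := Finset.exists_min_image 𝔉 card ⟨C, h𝔉⟩
  simp only [h𝔉def, mem_filter, mem_powerset] at hs𝔉
  obtain ⟨hsC, hsinf⟩ := hs𝔉
  have hscard : 2^d + 1 ≤ s.card := by
    by_contra hcon
    exact hsinf (h s hsC (by omega))
  -- witnesses for proper subsystems
  have hproper : ∀ c : (Fin d → ℤ) × ℤ, ∃ x : Fin d → ℤ,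
      c ∈ s → ∀ c' ∈ s.erase c, idot c'.1 x ≤ c'.2 := by
    intro c
    by_cases hc : c ∈ s
    · have herase : ∃ z, ∀ c' ∈ s.erase c, idot c'.1 z ≤ c'.2 := by
        by_contra hcon
        have hmem : s.erase c ∈ 𝔉 := by
          simp only [h𝔉def, mem_filter, mem_powerset]
          exact ⟨(Finset.erase_subset _ _).trans hsC, hcon⟩
        have := hsmin _ hmem
        have := Finset.card_erase_lt_of_mem hc
        omega
      obtain ⟨x, hx⟩ := herase
      exact ⟨x, fun _ => hx⟩
    · exact ⟨0, fun hmem => absurd hmem hc⟩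
  choose x hx using hproper
  -- maximize the sum of tightened bounds among infeasible tightenings
  set Good : ℤ → Prop := fun n => ∃ β : ((Fin d → ℤ) × ℤ) → ℤ,
      (∀ c ∈ s, c.2 ≤ β c) ∧ (¬ ∃ z, ∀ c ∈ s, idot c.1 z ≤ β c) ∧ n = ∑ c ∈ s, β c
      with hGood
  have hpoint : ∀ (β : ((Fin d → ℤ) × ℤ) → ℤ), (∀ c ∈ s, c.2 ≤ β c) →
      (¬ ∃ z, ∀ c ∈ s, idot c.1 z ≤ β c) → ∀ c ∈ s, β c ≤ idot c.1 (x c) - 1 := by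
    intro β hβ hinf c hc
    by_contra hcon
    push_neg at hcon
    refine hinf ⟨x c, fun c' hc' => ?_⟩
    by_cases hcc : c' = c
    · subst hcc; omega
    · exact le_trans (hx c hc c' (Finset.mem_erase.mpr ⟨hcc, hc'⟩)) (hβ c' hc')
  have hbdd : ∃ b : ℤ, ∀ n, Good n → n ≤ b := by
    refine ⟨∑ c ∈ s, (idot c.1 (x c) - 1), ?_⟩
    rintro n ⟨β, hβ, hinf, rfl⟩
    exact Finset.sum_le_sum (hpoint β hβ hinf)
  have hinh : ∃ n, Good n := ⟨∑ c ∈ s, c.2, fun c => c.2, fun _ _ => le_rfl, hsinf, rfl⟩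
  obtain ⟨n₀, ⟨β, hβb, hβinf, hn₀⟩, hmax⟩ := Int.exists_greatest_of_bdd hbdd hinh
  -- for each c ∈ s, bumping β at c makes the system feasible
  have hbump : ∀ c : (Fin d → ℤ) × ℤ, ∃ y : Fin d → ℤ, c ∈ s →
      ∀ c' ∈ s, idot c'.1 y ≤ Function.update β c (β c + 1) c' := by
    intro c
    by_cases hc : c ∈ s
    · have hfeas : ∃ y, ∀ c' ∈ s, idot c'.1 y ≤ Function.update β c (β c + 1) c' := by
        by_contra hcon
        have hsum : ∑ c' ∈ s, Function.update β c (β c + 1) c' = n₀ + 1 := by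
          rw [Finset.sum_update_of_mem hc, hn₀, Finset.sum_eq_sum_sdiff_singleton_add hc β]
          ring
        have : Good (n₀ + 1) := by
          refine ⟨Function.update β c (β c + 1), fun c' hc' => ?_, hcon, hsum.symm⟩
          by_cases hcc : c' = c
          · subst hcc; rw [Function.update_self]
            have := hβb c' hc'; omega
          · rw [Function.update_of_ne hcc]; exact hβb c' hc'
        have := hmax _ this
        omega
      obtain ⟨y, hy⟩ := hfeas
      exact ⟨y, fun _ => hy⟩
    · exact ⟨0, fun hmem => absurd hmem hc⟩
  choose y hy using hbump
  have hy2 : ∀ c ∈ s, idot c.1 (y c) = β c + 1 := by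
    intro c hc
    have h1 : idot c.1 (y c) ≤ β c + 1 := by
      have := hy c hc c hc
      rwa [Function.update_self] at this
    have h2 : ¬ idot c.1 (y c) ≤ β c := by
      intro hle
      refine hβinf ⟨y c, fun c' hc' => ?_⟩
      by_cases hcc : c' = c
      · subst hcc; exact hle
      · have := hy c hc c' hc'
        rwa [Function.update_of_ne hcc] at this
    omega
  have hy1 : ∀ c ∈ s, ∀ c' ∈ s, c' ≠ c → idot c'.1 (y c) ≤ β c' := by
    intro c hc c' hc' hne
    have := hy c hc c' hc'
    rwa [Function.update_of_ne hne] at this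
  -- pigeonhole on parities
  have hcardlt : (Finset.univ : Finset (Fin d → ZMod 2)).card < s.card := by
    rw [Finset.card_univ]
    have : Fintype.card (Fin d → ZMod 2) = 2 ^ d := by
      rw [Fintype.card_fun]
      simp
    omega
  obtain ⟨c₁, hc₁, c₂, hc₂, hne, hgeq⟩ :=
    Finset.exists_ne_map_eq_of_card_lt_of_maps_to hcardlt
      (f := fun c => (fun j => ((y c j : ZMod 2)))) (fun c _ => Finset.mem_univ _)
  have hdvd : ∀ j, (2:ℤ) ∣ (y c₁ j + y c₂ j) := by
    intro j
    have hzm : ((y c₁ j : ZMod 2)) = ((y c₂ j : ZMod 2)) := congrFun hgeq j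
    have : ((y c₁ j - y c₂ j : ℤ) : ZMod 2) = 0 := by
      push_cast
      rw [hzm]; ring
    have hdiff : (2:ℤ) ∣ (y c₁ j - y c₂ j) := by
      exact_mod_cast (ZMod.intCast_zmod_eq_zero_iff_dvd _ 2).mp this
    obtain ⟨t, ht⟩ := hdiff
    exact ⟨t + y c₂ j, by omega⟩
  set m : Fin d → ℤ := fun j => (y c₁ j + y c₂ j) / 2 with hm
  have hm2 : ∀ j, m j * 2 = y c₁ j + y c₂ j := fun j => Int.ediv_mul_cancel (hdvd j)
  have hdot : ∀ a : Fin d → ℤ, idot a m * 2 = idot a (y c₁) + idot a (y c₂) := by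
    intro a
    rw [idot, idot, idot, Finset.sum_mul, ← Finset.sum_add_distrib]
    refine Finset.sum_congr rfl fun j _ => ?_
    rw [mul_assoc, hm2 j]
    ring
  refine hβinf ⟨m, fun c hc => ?_⟩
  have h3 := hdot c.1
  have hone : idot c.1 (y c₁) ≤ β c ∨ idot c.1 (y c₂) ≤ β c := by
    by_cases e1 : c = c₁
    · right; refine hy1 c₂ hc₂ c hc ?_; rw [e1]; exact hne
    · left; exact hy1 c₁ hc₁ c hc e1
  have hboth1 : idot c.1 (y c₁) ≤ β c + 1 := by
    by_cases e1 : c = c₁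
    · subst e1; exact le_of_eq (hy2 c hc)
    · exact (hy1 c₁ hc₁ c hc e1).trans (by omega)
  have hboth2 : idot c.1 (y c₂) ≤ β c + 1 := by
    by_cases e2 : c = c₂
    · subst e2; exact le_of_eq (hy2 c hc)
    · exact (hy1 c₂ hc₂ c hc e2).trans (by omega)
  rcases hone with h | h <;> omega


private lemma deepPoint {d : ℕ} (k : ℕ) (P : Finset (Fin d → ℤ)) (hP : 2^d * k + 1 ≤ P.card) :
    ∃ z : Fin d → ℤ, ∀ X : Finset (Fin d → ℤ), X ⊆ P → X.card ≤ k →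
      ctR z ∈ convexHull ℝ (↑((P \ X).image ctR) : Set (Fin d → ℝ)) := by
  classical
  by_contra hcon
  push_neg at hcon
  choose X hX1 hX2 hX3 using hcon
  have hsep : ∀ z, ∃ a : Fin d → ℤ, ∀ p ∈ P \ X z, idot a p < idot a z :=
    fun z => sep _ z (hX3 z)
  choose a ha using hsep
  have hPne : P.Nonempty := card_pos.mp (by omega)
  have hbounds : ∀ i : Fin d, ∃ l h : ℤ, ∀ p ∈ P, l ≤ p i ∧ p i ≤ h := by
    intro i
    have hne : (P.image (fun p => p i)).Nonempty := hPne.image _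
    refine ⟨(P.image (fun p => p i)).min' hne, (P.image (fun p => p i)).max' hne, fun p hp => ?_⟩
    exact ⟨Finset.min'_le _ _ (Finset.mem_image_of_mem (fun q => q i) hp),
      Finset.le_max' _ _ (Finset.mem_image_of_mem (fun q => q i) hp)⟩
  choose lo hi hlohi using hbounds
  set Z : Finset (Fin d → ℤ) := Fintype.piFinset (fun i => Finset.Icc (lo i) (hi i)) with hZ
  set Cbox : Finset ((Fin d → ℤ) × ℤ) :=
    (Finset.univ : Finset (Fin d)).biUnion
      (fun i => {((Pi.single i 1 : Fin d → ℤ), hi i), (-(Pi.single i 1 : Fin d → ℤ), -lo i)}) with hCbox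
  set C : Finset ((Fin d → ℤ) × ℤ) := Cbox ∪ Z.image (fun z => (a z, idot (a z) z - 1)) with hC
  have hdot_single : ∀ (i : Fin d) (p : Fin d → ℤ), idot (Pi.single i 1) p = p i := by
    intro i p
    rw [idot]
    simp [Pi.single_apply, ite_mul]
  have hdot_negsingle : ∀ (i : Fin d) (p : Fin d → ℤ), idot (-(Pi.single i 1 : Fin d → ℤ)) p = -p i := by
    intro i p
    rw [idot]
    simp [Pi.single_apply, ite_mul]
  -- all points of P satisfy box constraints
  have hboxsat : ∀ c ∈ Cbox, ∀ p ∈ P, idot c.1 p ≤ c.2 := by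
    intro c hc p hp
    simp only [hCbox, Finset.mem_biUnion, Finset.mem_insert, Finset.mem_singleton] at hc
    obtain ⟨i, _, hc | hc⟩ := hc <;> subst hc
    · show idot (Pi.single i 1) p ≤ hi i
      rw [hdot_single]
      exact (hlohi i p hp).2
    · show idot (-(Pi.single i 1 : Fin d → ℤ)) p ≤ -lo i
      rw [hdot_negsingle]
      exact neg_le_neg (hlohi i p hp).1
  -- each constraint of C is violated by at most k points of P
  have hviol : ∀ c ∈ C, (P.filter (fun p => c.2 < idot c.1 p)).card ≤ k := by
    intro c hc
    rw [hC, Finset.mem_union] at hc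
    rcases hc with hc | hc
    · have : P.filter (fun p => c.2 < idot c.1 p) = ∅ := by
        rw [Finset.filter_eq_empty_iff]
        intro p hp
        simpa using hboxsat c hc p hp
      simp [this]
    · obtain ⟨z, _, rfl⟩ := Finset.mem_image.mp hc
      have hsub : P.filter (fun p => idot (a z) z - 1 < idot (a z) p) ⊆ X z := by
        intro p hp
        rw [Finset.mem_filter] at hp
        obtain ⟨hpP, hpv⟩ := hp
        by_contra hpX
        have : p ∈ P \ X z := Finset.mem_sdiff.mpr ⟨hpP, hpX⟩
        have := ha z p this
        omega
      exact (Finset.card_le_card hsub).trans (hX2 z)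
  -- every small subsystem is satisfied by some point of P
  have hsub : ∀ s ⊆ C, s.card ≤ 2^d → ∃ z : Fin d → ℤ, ∀ c ∈ s, idot c.1 z ≤ c.2 := by
    intro s hs hcard
    by_contra hno
    push_neg at hno
    have hcover : P ⊆ s.biUnion (fun c => P.filter (fun p => c.2 < idot c.1 p)) := by
      intro p hp
      obtain ⟨c, hc, hcv⟩ := hno p
      exact Finset.mem_biUnion.mpr ⟨c, hc, Finset.mem_filter.mpr ⟨hp, hcv⟩⟩
    have h1 := Finset.card_le_card hcover
    have h2 := Finset.card_biUnion_le (s := s) (t := fun c => P.filter (fun p => c.2 < idot c.1 p))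
    have h3 : ∑ c ∈ s, (P.filter (fun p => c.2 < idot c.1 p)).card ≤ ∑ _c ∈ s, k :=
      Finset.sum_le_sum (fun c hc => hviol c (hs hc))
    rw [Finset.sum_const, smul_eq_mul] at h3
    have h4 : s.card * k ≤ 2^d * k := Nat.mul_le_mul_right k hcard
    omega
  obtain ⟨z, hz⟩ := bellScarf C hsub
  have hzZ : z ∈ Z := by
    rw [hZ, Fintype.mem_piFinset]
    intro i
    rw [Finset.mem_Icc]
    have hmem1 : ((Pi.single i 1 : Fin d → ℤ), hi i) ∈ C := by
      rw [hC, Finset.mem_union]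
      left
      rw [hCbox, Finset.mem_biUnion]
      exact ⟨i, Finset.mem_univ i, by simp⟩
    have hmem2 : (-(Pi.single i 1 : Fin d → ℤ), -lo i) ∈ C := by
      rw [hC, Finset.mem_union]
      left
      rw [hCbox, Finset.mem_biUnion]
      exact ⟨i, Finset.mem_univ i, by simp⟩
    have h1 := hz _ hmem1
    have h2 := hz _ hmem2
    rw [hdot_single] at h1
    rw [hdot_negsingle] at h2
    constructor <;> [omega; exact h1]
  have hmem : (a z, idot (a z) z - 1) ∈ C := by
    rw [hC, Finset.mem_union]
    right
    exact Finset.mem_image.mpr ⟨z, hzZ, rfl⟩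
  have := hz _ hmem
  simp only at this
  omega

private lemma exists_minimal_hull {d : ℕ} (R : Finset (Fin d → ℝ)) (z : Fin d → ℝ)
    (hz : z ∈ convexHull ℝ (↑R : Set (Fin d → ℝ))) :
    ∃ Q : Finset (Fin d → ℝ), Q ⊆ R ∧ z ∈ convexHull ℝ (↑Q : Set (Fin d → ℝ)) ∧
      ∀ x ∈ Q, z ∉ convexHull ℝ (↑(Q.erase x) : Set (Fin d → ℝ)) := by
  classical
  set 𝒜 := R.powerset.filter (fun Q : Finset (Fin d → ℝ) => z ∈ convexHull ℝ (↑Q : Set (Fin d → ℝ))) with h𝒜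
  have hne : 𝒜.Nonempty := ⟨R, by
    simp only [h𝒜, Finset.mem_filter, Finset.mem_powerset]
    exact ⟨Finset.Subset.refl R, hz⟩⟩
  obtain ⟨Q, hQ𝒜, hQmin⟩ := Finset.exists_min_image 𝒜 Finset.card hne
  simp only [h𝒜, Finset.mem_filter, Finset.mem_powerset] at hQ𝒜
  refine ⟨Q, hQ𝒜.1, hQ𝒜.2, fun x hx hcon => ?_⟩
  have hmem : Q.erase x ∈ 𝒜 := by
    simp only [h𝒜, Finset.mem_filter, Finset.mem_powerset]
    exact ⟨(Finset.erase_subset _ _).trans hQ𝒜.1, hcon⟩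
  have h1 := hQmin _ hmem
  have h2 := Finset.card_erase_lt_of_mem hx
  omega

private lemma minCard {d : ℕ} {Q : Finset (Fin d → ℝ)} {z : Fin d → ℝ}
    (h1 : z ∈ convexHull ℝ (↑Q : Set (Fin d → ℝ)))
    (h2 : ∀ x ∈ Q, z ∉ convexHull ℝ (↑(Q.erase x) : Set (Fin d → ℝ))) :
    AffineIndependent ℝ (Subtype.val : (↑Q : Set (Fin d → ℝ)) → (Fin d → ℝ)) ∧ Q.card ≤ d + 1 := by
  classical
  rw [convexHull_eq_union] at h1
  simp only [Set.mem_iUnion] at h1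
  obtain ⟨t, hts, hai, hzt⟩ := h1
  have htQ : t ⊆ Q := by exact_mod_cast hts
  have ht : t = Q := by
    by_contra hne
    obtain ⟨x, hxQ, hxt⟩ := Finset.exists_of_ssubset (lt_of_le_of_ne htQ hne)
    refine h2 x hxQ (convexHull_mono ?_ hzt)
    exact_mod_cast Finset.subset_erase.mpr ⟨htQ, hxt⟩
  subst ht
  refine ⟨hai, ?_⟩
  have hQne : t.Nonempty := by
    rcases t.eq_empty_or_nonempty with rfl | h
    · simp at hzt
    · exact h
  have hcard : Fintype.card (↑t : Set (Fin d → ℝ)) = t.card := by simp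
  have h3 := hai.card_le_finrank_succ
  simp only [Finset.coe_sort_coe, Fintype.card_coe] at h3
  refine le_trans h3 (Nat.add_le_add_right (le_trans (Submodule.finrank_le _) (le_of_eq ?_)) 1)
  simp

private lemma part {d r : ℕ} (hr : 1 ≤ r) (T : Finset (Fin d → ℝ)) (z : Fin d → ℝ)
    (hT : (r-1)*(d+1) + 1 ≤ T.card)
    (hdeep : ∀ X : Finset (Fin d → ℝ), X ⊆ T → X.card ≤ (r-1)*d →
      z ∈ convexHull ℝ (↑(T \ X) : Set (Fin d → ℝ))) :
    ∃ R : Fin r → Finset (Fin d → ℝ),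
      (∀ i j, i ≠ j → Disjoint (R i) (R j)) ∧
      (Finset.univ.biUnion R = T) ∧ ∀ i, z ∈ convexHull ℝ (↑(R i) : Set (Fin d → ℝ)) := by
  classical
  have aux : ∀ m : ℕ, m ≤ r → ∃ Q : Fin m → Finset (Fin d → ℝ),
      (∀ i j, i ≠ j → Disjoint (Q i) (Q j)) ∧ (∀ i, Q i ⊆ T) ∧
      (∀ i, z ∈ convexHull ℝ (↑(Q i) : Set (Fin d → ℝ))) ∧
      (∀ i, ∀ x ∈ Q i, z ∉ convexHull ℝ (↑((Q i).erase x) : Set (Fin d → ℝ))) := by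
    intro m
    induction m with
    | zero => exact fun _ => ⟨fun i => i.elim0, fun i => i.elim0, fun i => i.elim0,
        fun i => i.elim0, fun i => i.elim0⟩
    | succ m ih =>
      intro hm1
      obtain ⟨Q, hdisj, hsub, hhull, hmin⟩ := ih (by omega)
      have hcard : ∀ i, (Q i).card ≤ d + 1 := fun i => (minCard (hhull i) (hmin i)).2
      set U : Finset (Fin d → ℝ) := Finset.univ.biUnion Q with hU
      have hUT : U ⊆ T := by
        intro x hx
        rw [hU, Finset.mem_biUnion] at hx
        obtain ⟨i, _, h⟩ := hx
        exact hsub i h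
      have hUcard : U.card ≤ m * (d+1) := by
        calc U.card ≤ ∑ i : Fin m, (Q i).card := Finset.card_biUnion_le
        _ ≤ ∑ _i : Fin m, (d+1) := Finset.sum_le_sum (fun i _ => hcard i)
        _ = m * (d+1) := by rw [Finset.sum_const]; simp [mul_comm]
      have hmr : m ≤ r - 1 := by omega
      have hzU : z ∈ convexHull ℝ (↑(T \ U) : Set (Fin d → ℝ)) := by
        by_contra hcon
        have hRne : (T \ U).Nonempty := by
          rw [← Finset.card_pos, Finset.card_sdiff_of_subset hUT]
          have : m * (d+1) ≤ (r-1)*(d+1) := Nat.mul_le_mul_right _ hmr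
          omega
        have hcl : IsClosed (convexHull ℝ (↑(T \ U) : Set (Fin d → ℝ))) :=
          ((T \ U).finite_toSet.isCompact_convexHull ℝ).isClosed
        obtain ⟨f, u, hfu, hu⟩ := geometric_hahn_banach_closed_point (convex_convexHull ℝ _) hcl hcon
        set H : Finset (Fin d → ℝ) := T.filter (fun x => f z ≤ f x) with hH
        have hHU : H ⊆ U := by
          intro x hx
          rw [hH, Finset.mem_filter] at hx
          by_contra hxU
          have hxR : x ∈ T \ U := Finset.mem_sdiff.mpr ⟨hx.1, hxU⟩
          have := hfu x (subset_convexHull ℝ _ (Finset.mem_coe.mpr hxR))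
          linarith [hx.2]
        have hHcard : (r-1)*d + 1 ≤ H.card := by
          by_contra hcon2
          push_neg at hcon2
          have hz2 := hdeep H (Finset.filter_subset _ _) (by omega)
          have hsubhalf : (↑(T \ H) : Set (Fin d → ℝ)) ⊆ {x | f x < f z} := by
            intro x hx
            rw [Finset.coe_sdiff, Set.mem_diff] at hx
            obtain ⟨hxT, hxH⟩ := hx
            rw [Finset.mem_coe] at hxT
            rw [Finset.mem_coe, hH, Finset.mem_filter] at hxH
            simp only [Set.mem_setOf_eq]
            push_neg at hxH
            exact hxH hxT
          have hconvhalf : Convex ℝ {x : Fin d → ℝ | f x < f z} :=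
            convex_halfSpace_lt ⟨fun a b => map_add f a b, fun c a => map_smul f c a⟩ _
          have h7 : f z < f z := convexHull_min hsubhalf hconvhalf hz2
          exact lt_irrefl _ h7
        have hcover : H ⊆ Finset.univ.biUnion (fun i => Q i ∩ H) := by
          intro x hx
          have hxU := hHU hx
          rw [hU, Finset.mem_biUnion] at hxU
          obtain ⟨i, _, h⟩ := hxU
          exact Finset.mem_biUnion.mpr ⟨i, Finset.mem_univ i, Finset.mem_inter.mpr ⟨h, hx⟩⟩
        have hsum : H.card ≤ ∑ i : Fin m, (Q i ∩ H).card :=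
          le_trans (Finset.card_le_card hcover) Finset.card_biUnion_le
        have hex : ∃ i, d + 1 ≤ (Q i ∩ H).card := by
          by_contra hcon3
          push_neg at hcon3
          have h5 : ∑ i : Fin m, (Q i ∩ H).card ≤ ∑ _i : Fin m, d :=
            Finset.sum_le_sum (fun i _ => by have := hcon3 i; omega)
          rw [Finset.sum_const] at h5
          simp only [smul_eq_mul, Finset.card_univ, Fintype.card_fin] at h5
          have h6 : m * d ≤ (r-1) * d := Nat.mul_le_mul_right _ hmr
          omega
        obtain ⟨i, hi⟩ := hex
        have heq : Q i ∩ H = Q i :=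
          Finset.eq_of_subset_of_card_le Finset.inter_subset_left (le_trans (hcard i) hi)
        have hfQ : ∀ q ∈ Q i, f z ≤ f q := by
          intro q hq
          have : q ∈ Q i ∩ H := by rw [heq]; exact hq
          have := (Finset.mem_inter.mp this).2
          rw [hH, Finset.mem_filter] at this
          exact this.2
        have hzi := hhull i
        rw [Finset.convexHull_eq] at hzi
        obtain ⟨w, hw0, hw1, hwz⟩ := hzi
        have hwpos : ∀ q ∈ Q i, 0 < w q := by
          intro q hq
          rcases lt_or_eq_of_le (hw0 q hq) with h | h
          · exact h
          · exfalso
            apply hmin i q hq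
            have hsum' : ∑ y ∈ (Q i).erase q, w y = 1 := by
              rw [Finset.sum_erase _ (by rw [← h])]
              exact hw1
            have hcm : ((Q i).erase q).centerMass w id = z := by
              rw [Finset.centerMass_eq_of_sum_1 _ _ hsum', ← hwz,
                Finset.centerMass_eq_of_sum_1 _ _ hw1]
              exact Finset.sum_erase _ (by rw [← h, zero_smul])
            rw [← hcm]
            exact Finset.centerMass_mem_convexHull _
              (fun y hy => hw0 y (Finset.erase_subset _ _ hy))
              (by rw [hsum']; norm_num)
              (fun y hy => Finset.mem_coe.mpr hy)
        have hfeq : ∀ q ∈ Q i, f q = f z := by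
          intro q hq
          by_contra hne
          have hlt : f z < f q := lt_of_le_of_ne (hfQ q hq) (Ne.symm hne)
          have hstrict : ∑ y ∈ Q i, w y * f z < ∑ y ∈ Q i, w y * f y := by
            refine Finset.sum_lt_sum (fun y hy => mul_le_mul_of_nonneg_left (hfQ y hy) (hw0 y hy))
              ⟨q, hq, mul_lt_mul_of_pos_left hlt (hwpos q hq)⟩
          have hzval : f z = ∑ y ∈ Q i, w y * f y := by
            conv_lhs => rw [← hwz, Finset.centerMass_eq_of_sum_1 _ _ hw1]
            rw [map_sum]
            exact Finset.sum_congr rfl fun y _ => by rw [map_smul, smul_eq_mul, id]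
          rw [← Finset.sum_mul, hw1, one_mul] at hstrict
          linarith
        have hQcard : (Q i).card = d + 1 :=
          le_antisymm (hcard i) (le_trans hi (Finset.card_le_card Finset.inter_subset_left))
        have hai := (minCard (hhull i) (hmin i)).1
        have hker : vectorSpan ℝ (↑(Q i) : Set (Fin d → ℝ)) ≤ LinearMap.ker (f : (Fin d → ℝ) →ₗ[ℝ] ℝ) := by
          rw [vectorSpan_def, Submodule.span_le]
          rintro v ⟨p1, hp1, p2, hp2, rfl⟩
          simp only [SetLike.mem_coe, LinearMap.mem_ker, ContinuousLinearMap.coe_coe]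
          rw [vsub_eq_sub, map_sub, hfeq p1 (Finset.mem_coe.mp hp1), hfeq p2 (Finset.mem_coe.mp hp2),
            sub_self]
        have hcardcoe : Fintype.card (↑(Q i) : Set (Fin d → ℝ)) = d + 1 := by
          simp [hQcard]
        have hfr := hai.finrank_vectorSpan hcardcoe
        have hvs : vectorSpan ℝ (Set.range (Subtype.val : (↑(Q i) : Set (Fin d → ℝ)) → (Fin d → ℝ)))
            = vectorSpan ℝ (↑(Q i) : Set (Fin d → ℝ)) := congrArg (vectorSpan ℝ) Subtype.range_coe
        rw [hvs] at hfr
        have hkerlt : LinearMap.ker (f : (Fin d → ℝ) →ₗ[ℝ] ℝ) < ⊤ := by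
          rw [lt_top_iff_ne_top]
          intro htop
          obtain ⟨x₀, hx₀⟩ := hRne
          have hfx₀ := hfu x₀ (subset_convexHull ℝ _ (Finset.mem_coe.mpr hx₀))
          have : z - x₀ ∈ LinearMap.ker (f : (Fin d → ℝ) →ₗ[ℝ] ℝ) := htop ▸ Submodule.mem_top
          rw [LinearMap.mem_ker] at this
          simp only [ContinuousLinearMap.coe_coe, map_sub] at this
          linarith
        have hkerfr := Submodule.finrank_lt (ne_top_of_lt hkerlt)
        have hErank : Module.finrank ℝ (Fin d → ℝ) = d := by simp
        have hmono := Submodule.finrank_mono hker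
        omega
      obtain ⟨Qnew, hQnewsub, hQnewhull, hQnewmin⟩ := exists_minimal_hull _ _ hzU
      set QQ : Fin (m+1) → Finset (Fin d → ℝ) :=
        fun i => if h : (i : ℕ) < m then Q ⟨i, h⟩ else Qnew with hQQ
      have hQQlt : ∀ (i : Fin (m+1)) (h : (i : ℕ) < m), QQ i = Q ⟨i, h⟩ := by
        intro i h; simp [hQQ, h]
      have hQQge : ∀ (i : Fin (m+1)), ¬ (i : ℕ) < m → QQ i = Qnew := by
        intro i h; simp [hQQ, h]
      refine ⟨QQ, ?_, ?_, ?_, ?_⟩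
      · intro i j hne
        by_cases hi' : (i : ℕ) < m <;> by_cases hj' : (j : ℕ) < m
        · rw [hQQlt i hi', hQQlt j hj']
          refine hdisj _ _ ?_
          intro hcontra
          apply hne
          apply Fin.ext
          simpa using congrArg Fin.val hcontra
        · rw [hQQlt i hi', hQQge j hj']
          rw [Finset.disjoint_right]
          intro x hx hx'
          have hxU : x ∈ U := by
            rw [hU, Finset.mem_biUnion]; exact ⟨⟨i, hi'⟩, Finset.mem_univ _, hx'⟩
          exact (Finset.mem_sdiff.mp (hQnewsub hx)).2 hxU
        · rw [hQQge i hi', hQQlt j hj']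
          rw [Finset.disjoint_left]
          intro x hx hx'
          have hxU : x ∈ U := by
            rw [hU, Finset.mem_biUnion]; exact ⟨⟨j, hj'⟩, Finset.mem_univ _, hx'⟩
          exact (Finset.mem_sdiff.mp (hQnewsub hx)).2 hxU
        · exact absurd (show i = j from Fin.ext (by omega)) hne
      · intro i
        by_cases hi' : (i : ℕ) < m
        · rw [hQQlt i hi']; exact hsub _
        · rw [hQQge i hi']; exact hQnewsub.trans Finset.sdiff_subset
      · intro i
        by_cases hi' : (i : ℕ) < m
        · rw [hQQlt i hi']; exact hhull _
        · rw [hQQge i hi']; exact hQnewhull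
      · intro i
        by_cases hi' : (i : ℕ) < m
        · rw [hQQlt i hi']; exact hmin _
        · rw [hQQge i hi']; exact hQnewmin
  obtain ⟨Q, hdisj, hsub, hhull, hmin⟩ := aux r le_rfl
  set last : Fin r := ⟨r-1, by omega⟩ with hlast
  set U' : Finset (Fin d → ℝ) := (Finset.univ.erase last).biUnion Q with hU'
  have hQlast : Q last ⊆ T \ U' := by
    intro x hx
    rw [Finset.mem_sdiff]
    refine ⟨hsub _ hx, ?_⟩
    intro hxU
    rw [hU', Finset.mem_biUnion] at hxU
    obtain ⟨j, hj, hxj⟩ := hxU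
    have hjne : j ≠ last := (Finset.mem_erase.mp hj).1
    exact Finset.disjoint_left.mp (hdisj j last hjne) hxj hx
  set RR : Fin r → Finset (Fin d → ℝ) := fun i => if i = last then T \ U' else Q i with hRR
  have hRRlast : RR last = T \ U' := by simp [hRR]
  have hRRne : ∀ i, i ≠ last → RR i = Q i := by intro i h; simp [hRR, h]
  refine ⟨RR, ?_, ?_, ?_⟩
  · intro i j hne
    by_cases hi' : i = last <;> by_cases hj' : j = last
    · exact absurd (hi'.trans hj'.symm) hne
    · rw [hi', hRRlast, hRRne j hj']
      rw [Finset.disjoint_right]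
      intro x hx hx'
      have hxU : x ∈ U' := by
        rw [hU', Finset.mem_biUnion]
        exact ⟨j, Finset.mem_erase.mpr ⟨hj', Finset.mem_univ _⟩, hx⟩
      exact (Finset.mem_sdiff.mp hx').2 hxU
    · rw [hj', hRRlast, hRRne i hi']
      rw [Finset.disjoint_left]
      intro x hx hx'
      have hxU : x ∈ U' := by
        rw [hU', Finset.mem_biUnion]
        exact ⟨i, Finset.mem_erase.mpr ⟨hi', Finset.mem_univ _⟩, hx⟩
      exact (Finset.mem_sdiff.mp hx').2 hxU
    · rw [hRRne i hi', hRRne j hj']; exact hdisj i j hne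
  · ext x
    rw [Finset.mem_biUnion]
    constructor
    · rintro ⟨i, _, hx⟩
      by_cases hi' : i = last
      · rw [hi', hRRlast] at hx; exact (Finset.mem_sdiff.mp hx).1
      · rw [hRRne i hi'] at hx; exact hsub i hx
    · intro hxT
      by_cases hxU : x ∈ U'
      · rw [hU', Finset.mem_biUnion] at hxU
        obtain ⟨j, hj, hxj⟩ := hxU
        refine ⟨j, Finset.mem_univ _, ?_⟩
        rw [hRRne j (Finset.mem_erase.mp hj).1]
        exact hxj
      · exact ⟨last, Finset.mem_univ _, by rw [hRRlast]; exact Finset.mem_sdiff.mpr ⟨hxT, hxU⟩⟩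
  · intro i
    by_cases hi' : i = last
    · rw [hi', hRRlast]
      exact convexHull_mono (Finset.coe_subset.mpr hQlast) (hhull last)
    · rw [hRRne i hi']; exact hhull i

/-- Integer Tverberg theorem: any finite set of at least `(r-1)·d·2^d + 1` integer points
in `ℤ^d` can be partitioned into `r` pairwise disjoint subsets such that the intersection
of the convex hulls of the parts contains an integer point. -/
theorem integer_tverberg (d r : ℕ) (hd : 1 ≤ d) (hr : 1 ≤ r) (P : Finset (Fin d → ℤ))
    (hP : (r - 1) * d * 2 ^ d + 1 ≤ P.card) :
    ∃ Q : Fin r → Finset (Fin d → ℤ),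
      (∀ i j, i ≠ j → Disjoint (Q i) (Q j)) ∧
      (⋃ i, (Q i : Set (Fin d → ℤ))) = (P : Set (Fin d → ℤ)) ∧
      ∃ z : Fin d → ℤ, ∀ i,
        (fun j => (z j : ℝ)) ∈
          convexHull ℝ ((fun w : Fin d → ℤ => fun j => (w j : ℝ)) '' (Q i : Set (Fin d → ℤ))) := by
  classical
  have hk : 2^d * ((r-1)*d) + 1 ≤ P.card := by
    have h0 : (r-1)*d*2^d = 2^d*((r-1)*d) := by ring
    omega
  obtain ⟨z, hz⟩ := deepPoint ((r-1)*d) P hk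
  set T : Finset (Fin d → ℝ) := P.image ctR with hT
  have hctRinj : Function.Injective (ctR (d := d)) := by
    intro x y h
    funext j
    have h2 : (x j : ℝ) = (y j : ℝ) := congrFun h j
    exact_mod_cast h2
  have hTcard : T.card = P.card := Finset.card_image_of_injective _ hctRinj
  have hTbig : (r-1)*(d+1) + 1 ≤ T.card := by
    rw [hTcard]
    have h2 : 2 ≤ 2^d := by
      calc 2 = 2^1 := (pow_one 2).symm
      _ ≤ 2^d := Nat.pow_le_pow_right (by norm_num) hd
    have h1 : d + 1 ≤ d * 2^d := by nlinarith [hd]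
    have h3 : (r-1)*(d+1) ≤ (r-1)*(d*2^d) := Nat.mul_le_mul_left _ h1
    have heq : (r-1)*(d*2^d) = (r-1)*d*2^d := by ring
    omega
  have hdeepT : ∀ X : Finset (Fin d → ℝ), X ⊆ T → X.card ≤ (r-1)*d →
      ctR z ∈ convexHull ℝ (↑(T \ X) : Set (Fin d → ℝ)) := by
    intro X hXT hXcard
    set Y : Finset (Fin d → ℤ) := P.filter (fun p => ctR p ∈ X) with hY
    have hYP : Y ⊆ P := Finset.filter_subset _ _
    have hYcard : Y.card ≤ X.card := by
      have himg : Y.image ctR ⊆ X := by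
        intro x hx
        obtain ⟨p, hp, rfl⟩ := Finset.mem_image.mp hx
        exact (Finset.mem_filter.mp hp).2
      calc Y.card = (Y.image ctR).card := (Finset.card_image_of_injective _ hctRinj).symm
      _ ≤ X.card := Finset.card_le_card himg
    have himg2 : (P \ Y).image ctR = T \ X := by
      ext x
      constructor
      · intro hx
        obtain ⟨p, hp, rfl⟩ := Finset.mem_image.mp hx
        obtain ⟨hpP, hpY⟩ := Finset.mem_sdiff.mp hp
        rw [Finset.mem_sdiff]
        refine ⟨Finset.mem_image_of_mem _ hpP, fun hcon => ?_⟩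
        exact hpY (Finset.mem_filter.mpr ⟨hpP, hcon⟩)
      · intro hx
        obtain ⟨hxT, hxX⟩ := Finset.mem_sdiff.mp hx
        obtain ⟨p, hp, rfl⟩ := Finset.mem_image.mp hxT
        refine Finset.mem_image_of_mem _ (Finset.mem_sdiff.mpr ⟨hp, fun hcon => ?_⟩)
        exact hxX (Finset.mem_filter.mp hcon).2
    have := hz Y hYP (hYcard.trans hXcard)
    rwa [himg2] at this
  obtain ⟨R, hRdisj, hRunion, hRhull⟩ := part hr T (ctR z) hTbig hdeepT
  refine ⟨fun i => P.filter (fun p => ctR p ∈ R i), ?_, ?_, z, ?_⟩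
  · intro i j hij
    rw [Finset.disjoint_left]
    intro p hp hp'
    have h1 := (Finset.mem_filter.mp hp).2
    have h2 := (Finset.mem_filter.mp hp').2
    exact Finset.disjoint_left.mp (hRdisj i j hij) h1 h2
  · ext p
    simp only [Set.mem_iUnion, Finset.mem_coe, Finset.mem_filter]
    constructor
    · rintro ⟨i, hp, _⟩; exact hp
    · intro hp
      have hpT : ctR p ∈ T := Finset.mem_image_of_mem _ hp
      rw [← hRunion, Finset.mem_biUnion] at hpT
      obtain ⟨i, _, hi⟩ := hpT
      exact ⟨i, hp, hi⟩
  · intro i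
    have hset : ((fun w : Fin d → ℤ => fun j => (w j : ℝ)) ''
        ((P.filter (fun p => ctR p ∈ R i)) : Set (Fin d → ℤ))) = (↑(R i) : Set (Fin d → ℝ)) := by
      ext x
      constructor
      · rintro ⟨p, hp, rfl⟩
        have : p ∈ P.filter (fun p => ctR p ∈ R i) := Finset.mem_coe.mp hp
        exact Finset.mem_coe.mpr (Finset.mem_filter.mp this).2
      · intro hx
        have hxRi : x ∈ R i := Finset.mem_coe.mp hx
        have hxT : x ∈ T := by
          rw [← hRunion, Finset.mem_biUnion]
          exact ⟨i, Finset.mem_univ _, hxRi⟩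
        obtain ⟨p, hp, rfl⟩ := Finset.mem_image.mp hxT
        exact ⟨p, Finset.mem_coe.mpr (Finset.mem_filter.mpr ⟨hp, hxRi⟩), rfl⟩
    show ctR z ∈ convexHull ℝ _
    rw [hset]
    exact hRhull i
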